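/- Let D be self-adjoint with compact resolvent, P_λ = χ_{[−λ,λ]}(D), B ∈ B(H) mapping dom|D| into itself with [|D|,B] bounded, and N > 0. Then ‖P_λ B (1 − P_{λ+N})‖_{HS} ≤ N^{−1} ‖P_λ [|D|, B] (1 − P_{λ+N})‖_{HS}. -/

import Mathlib

open Filter ENNReal

open scoped InnerProductSpace NNReal

/-- Widom's spectral-gap estimate. The operator `|D|` is encoded by a
Hilbert basis `e` of eigenvectors with nonnegative eigenvalues `μ k` (so `|D| e_k = μ_k e_k`),
`B` is a bounded operator mapping `dom|D|` into itself, and `Bc` is the bounded extension of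
the commutator `[|D|, B]`, which on matrix coefficients means
`⟨e_j, Bc e_k⟩ = (μ_j − μ_k)⟨e_j, B e_k⟩`.  The squared Hilbert–Schmidt norms
`‖P_λ B (1 − P_{λ+N})‖_HS² = ∑_{μ_j ≤ λ, μ_k > λ+N} |⟨e_j, B e_k⟩|²` (and similarly for `Bc`)
satisfy `‖P_λ B (1 − P_{λ+N})‖_HS² ≤ N⁻² ‖P_λ [|D|,B] (1 − P_{λ+N})‖_HS²`. -/
theorem hilbertSchmidt_sq_le_gap_commutator
    {H : Type*} [NormedAddCommGroup H] [InnerProductSpace ℂ H] [CompleteSpace H]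
    (e : HilbertBasis ℕ ℂ H) (μ : ℕ → ℝ) (hμ : ∀ k, 0 ≤ μ k)
    (B Bc : H →L[ℂ] H)
    (hcomm : ∀ j k : ℕ, ⟪e j, Bc (e k)⟫_ℂ = ((μ j : ℂ) - (μ k : ℂ)) * ⟪e j, B (e k)⟫_ℂ)
    (lam N : ℝ) (hN : 0 < N) :
    (∑' p : {j : ℕ // μ j ≤ lam} × {k : ℕ // lam + N < μ k},
        ((‖⟪e (p.1 : ℕ), B (e (p.2 : ℕ))⟫_ℂ‖₊ : ℝ≥0∞) ^ 2))
      ≤ ENNReal.ofReal (N⁻¹ ^ 2) *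
        ∑' p : {j : ℕ // μ j ≤ lam} × {k : ℕ // lam + N < μ k},
          ((‖⟪e (p.1 : ℕ), Bc (e (p.2 : ℕ))⟫_ℂ‖₊ : ℝ≥0∞) ^ 2) := by
  rw [← ENNReal.tsum_mul_left]
  refine ENNReal.tsum_le_tsum fun p => ?_
  obtain ⟨⟨j, hj⟩, ⟨k, hk⟩⟩ := p
  have hgap : N ≤ |μ j - μ k| := by
    rw [abs_sub_comm, abs_of_nonneg (by linarith)]
    linarith
  have hc : ‖⟪e j, Bc (e k)⟫_ℂ‖ = |μ j - μ k| * ‖⟪e j, B (e k)⟫_ℂ‖ := by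
    rw [hcomm j k, norm_mul]
    congr 1
    rw [← Complex.ofReal_sub, Complex.norm_real, Real.norm_eq_abs]
  have hreal : ‖⟪e j, B (e k)⟫_ℂ‖ ^ 2 ≤ N⁻¹ ^ 2 * ‖⟪e j, Bc (e k)⟫_ℂ‖ ^ 2 := by
    rw [hc, mul_pow, ← mul_assoc]
    have h1 : (1 : ℝ) ≤ N⁻¹ ^ 2 * |μ j - μ k| ^ 2 := by
      have h2 : (1 : ℝ) ≤ N⁻¹ * |μ j - μ k| := by
        rw [← inv_mul_cancel₀ hN.ne']
        exact mul_le_mul_of_nonneg_left hgap (inv_nonneg.mpr hN.le)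
      nlinarith
    nlinarith [sq_nonneg ‖⟪e j, B (e k)⟫_ℂ‖]
  calc ((‖⟪e j, B (e k)⟫_ℂ‖₊ : ℝ≥0∞) ^ 2)
      = ENNReal.ofReal (‖⟪e j, B (e k)⟫_ℂ‖ ^ 2) := by
        rw [ENNReal.ofReal_pow (norm_nonneg _), ofReal_norm, enorm_eq_nnnorm]
    _ ≤ ENNReal.ofReal (N⁻¹ ^ 2 * ‖⟪e j, Bc (e k)⟫_ℂ‖ ^ 2) := ENNReal.ofReal_le_ofReal hreal
    _ = ENNReal.ofReal (N⁻¹ ^ 2) * ((‖⟪e j, Bc (e k)⟫_ℂ‖₊ : ℝ≥0∞) ^ 2) := by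
        rw [ENNReal.ofReal_mul (by positivity), ENNReal.ofReal_pow (norm_nonneg _),
          ofReal_norm, enorm_eq_nnnorm]
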